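/- Let A be an introverted algebra with mean value on ℝ^N, so that Δ(A) is a compact topological semigroup under the Arens product. If the multiplication on Δ(A) is jointly continuous, then every element of Δ(A) is invertible, and Δ(A) is a compact topological group. -/

import Mathlib

open MeasureTheory Filter Topology
open scoped ENNReal NNReal

noncomputable section

abbrev RN (N : ℕ) := Fin N → ℝ

/-- `f` is a bounded uniformly continuous function on `ℝ^N`. -/
def IsBUC {N : ℕ} (f : RN N → ℂ) : Prop :=
  Bornology.IsBounded (Set.range f) ∧ UniformContinuous f

/-- `f` has mean value `M`: the rescalings `x ↦ f (x/ε)` converge to the constant `M`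
weakly-* in `L∞(ℝ^N)`, i.e. tested against every integrable function. -/
def HasMeanValue {N : ℕ} (f : RN N → ℂ) (M : ℂ) : Prop :=
  ∀ φ : RN N → ℂ, Integrable φ →
    Tendsto (fun ε : ℝ => ∫ x, f (ε⁻¹ • x) * φ x) (𝓝[>] (0:ℝ)) (𝓝 (M * ∫ x, φ x))

/-- An algebra with mean value on `ℝ^N`: a closed (under uniform convergence)
subalgebra of BUC(ℝ^N) containing the constants, stable under complex conjugation,
translation invariant, all of whose elements possess a mean value. -/
structure MVAlgebra (N : ℕ) where
  carrier : Set (RN N → ℂ)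
  buc : ∀ f ∈ carrier, IsBUC f
  const_mem : ∀ c : ℂ, (fun _ => c) ∈ carrier
  add_mem : ∀ f ∈ carrier, ∀ g ∈ carrier, f + g ∈ carrier
  mul_mem : ∀ f ∈ carrier, ∀ g ∈ carrier, f * g ∈ carrier
  smul_mem : ∀ (c : ℂ), ∀ f ∈ carrier, c • f ∈ carrier
  conj_mem : ∀ f ∈ carrier, (fun x => (starRingEnd ℂ) (f x)) ∈ carrier
  translate_mem : ∀ f ∈ carrier, ∀ a : RN N, (fun x => f (x + a)) ∈ carrier
  closed : ∀ f : RN N → ℂ,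
    (∀ ε : ℝ, 0 < ε → ∃ g ∈ carrier, ∀ x, ‖f x - g x‖ ≤ ε) → f ∈ carrier
  mean_value : ∀ f ∈ carrier, ∃ M : ℂ, HasMeanValue f M

/-- A character of `A`: a multiplicative linear functional on `A`, nonzero
(normalized by `μ 1 = 1`), automatically bounded, extended by zero off `A`.
The set of characters is the spectrum `Δ(A)`. -/
def IsCharacter {N : ℕ} (A : MVAlgebra N) (μ : (RN N → ℂ) → ℂ) : Prop :=
  (∀ f ∈ A.carrier, ∀ g ∈ A.carrier, μ (f + g) = μ f + μ g) ∧
  (∀ (c : ℂ), ∀ f ∈ A.carrier, μ (c • f) = c * μ f) ∧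
  (∀ f ∈ A.carrier, ∀ g ∈ A.carrier, μ (f * g) = μ f * μ g) ∧
  μ (fun _ => (1:ℂ)) = 1 ∧
  (∀ f, f ∉ A.carrier → μ f = 0) ∧
  (∀ f ∈ A.carrier, ∀ C : ℝ, (∀ x, ‖f x‖ ≤ C) → ‖μ f‖ ≤ C)

/-- The spectrum `Δ(A)` of `A`, carrying the weak-* (pointwise convergence) topology. -/
abbrev Spectrum' {N : ℕ} (A : MVAlgebra N) :=
  {μ : (RN N → ℂ) → ℂ // IsCharacter A μ}

open Classical in
/-- The Dirac mass at `y`, as a functional (evaluation at `y` on `A`, zero off `A`). -/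
def diracFun {N : ℕ} (A : MVAlgebra N) (y : RN N) : (RN N → ℂ) → ℂ :=
  fun f => if f ∈ A.carrier then f y else 0

/-- `A` is introverted: `T_μ f (x) = μ (τ_x f)` belongs to `A` for every
character `μ` and every `f ∈ A`. -/
def Introverted {N : ℕ} (A : MVAlgebra N) : Prop :=
  ∀ μ : Spectrum' A, ∀ f ∈ A.carrier,
    (fun x => μ.1 (fun z => f (z + x))) ∈ A.carrier

/-- `mul` is the Arens product on `Δ(A)`: `(μν)(f) = μ (T_ν f)` where
`T_ν f (x) = ν (f (· + x))`. -/
def IsArensMul {N : ℕ} (A : MVAlgebra N)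
    (mul : Spectrum' A → Spectrum' A → Spectrum' A) : Prop :=
  ∀ μ ν : Spectrum' A, ∀ f ∈ A.carrier,
    (mul μ ν).1 f = μ.1 (fun x => ν.1 (fun z => f (z + x)))

/-- The kernel `K(Δ(A)) = ⋂_{s} s·Δ(A)` of the semigroup `Δ(A)`. -/
def kern {N : ℕ} {A : MVAlgebra N}
    (mul : Spectrum' A → Spectrum' A → Spectrum' A) : Set (Spectrum' A) :=
  ⋂ s : Spectrum' A, Set.range (mul s)

namespace Stmt4Aux

variable {N : ℕ} (A : MVAlgebra N)

theorem dirac_isCharacter (y : RN N) : IsCharacter A (diracFun A y) := by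
  classical
  refine ⟨?_, ?_, ?_, ?_, ?_, ?_⟩
  · intro f hf g hg
    simp [diracFun, hf, hg, A.add_mem f hf g hg]
  · intro c f hf
    simp [diracFun, hf, A.smul_mem c f hf]
  · intro f hf g hg
    simp [diracFun, hf, hg, A.mul_mem f hf g hg]
  · simp [diracFun, A.const_mem 1]
  · intro f hf; simp [diracFun, hf]
  · intro f hf C hC
    simp only [diracFun, if_pos hf]
    exact hC y

/-- The Dirac mass at `y` as an element of the spectrum. -/
def diracS (y : RN N) : Spectrum' A := ⟨diracFun A y, dirac_isCharacter A y⟩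

theorem diracS_mul (mul : Spectrum' A → Spectrum' A → Spectrum' A)
    (hmul : IsArensMul A mul) (y y' : RN N) :
    mul (diracS A y) (diracS A y') = diracS A (y + y') := by
  classical
  apply Subtype.ext
  funext f
  by_cases hf : f ∈ A.carrier
  · rw [hmul _ _ f hf]
    have h1 : ∀ x : RN N, (fun z => f (z + x)) ∈ A.carrier := fun x =>
      A.translate_mem f hf x
    have : (fun x => (diracS A y').1 fun z => f (z + x)) = fun x => f (x + y') := by
      funext x
      simp only [diracS, diracFun, if_pos (h1 x)]
      rw [add_comm]
    rw [this]
    have h2 : (fun x => f (x + y')) ∈ A.carrier := A.translate_mem f hf y'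
    simp only [diracS, diracFun, if_pos h2, if_pos hf]
  · have h5 := (mul (diracS A y) (diracS A y')).2.2.2.2.2.1 f hf
    rw [h5]
    simp only [diracS, diracFun, if_neg hf]

end Stmt4Aux
namespace Stmt4Aux
variable {N : ℕ} (A : MVAlgebra N)

theorem isClosed_setOf_forall {X : Type*} [TopologicalSpace X] {ι : Sort*}
    {p : ι → X → Prop} (h : ∀ i, IsClosed {x | p i x}) : IsClosed {x | ∀ i, p i x} := by
  have : {x | ∀ i, p i x} = ⋂ i, {x | p i x} := by ext x; simp
  rw [this]; exact isClosed_iInter h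

theorem isClosed_characters : IsClosed {μ : (RN N → ℂ) → ℂ | IsCharacter A μ} := by
  have key : {μ : (RN N → ℂ) → ℂ | IsCharacter A μ} =
      {μ | ∀ f, ∀ _ : f ∈ A.carrier, ∀ g, ∀ _ : g ∈ A.carrier, μ (f + g) = μ f + μ g} ∩
      ({μ | ∀ c : ℂ, ∀ f, ∀ _ : f ∈ A.carrier, μ (c • f) = c * μ f} ∩
      ({μ | ∀ f, ∀ _ : f ∈ A.carrier, ∀ g, ∀ _ : g ∈ A.carrier, μ (f * g) = μ f * μ g} ∩
      ({μ | μ (fun _ => (1:ℂ)) = 1} ∩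
      ({μ | ∀ f, ∀ _ : f ∉ A.carrier, μ f = 0} ∩
      {μ | ∀ f, ∀ _ : f ∈ A.carrier, ∀ C : ℝ, ∀ _ : (∀ x, ‖f x‖ ≤ C), ‖μ f‖ ≤ C})))) := by
    ext μ
    constructor
    · rintro ⟨h1, h2, h3, h4, h5, h6⟩; exact ⟨h1, h2, h3, h4, h5, h6⟩
    · rintro ⟨h1, h2, h3, h4, h5, h6⟩; exact ⟨h1, h2, h3, h4, h5, h6⟩
  rw [key]
  refine IsClosed.inter ?_ (IsClosed.inter ?_ (IsClosed.inter ?_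
    (IsClosed.inter ?_ (IsClosed.inter ?_ ?_))))
  · refine isClosed_setOf_forall fun f => isClosed_setOf_forall fun _ =>
      isClosed_setOf_forall fun g => isClosed_setOf_forall fun _ => ?_
    exact isClosed_eq (continuous_apply _) ((continuous_apply f).add (continuous_apply g))
  · refine isClosed_setOf_forall fun c => isClosed_setOf_forall fun f =>
      isClosed_setOf_forall fun _ => ?_
    exact isClosed_eq (continuous_apply _) (continuous_const.mul (continuous_apply f))
  · refine isClosed_setOf_forall fun f => isClosed_setOf_forall fun _ =>
      isClosed_setOf_forall fun g => isClosed_setOf_forall fun _ => ?_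
    exact isClosed_eq (continuous_apply _) ((continuous_apply f).mul (continuous_apply g))
  · exact isClosed_eq (continuous_apply _) continuous_const
  · refine isClosed_setOf_forall fun f => isClosed_setOf_forall fun _ => ?_
    exact isClosed_eq (continuous_apply _) continuous_const
  · refine isClosed_setOf_forall fun f => isClosed_setOf_forall fun _ =>
      isClosed_setOf_forall fun C => isClosed_setOf_forall fun _ => ?_
    exact isClosed_le ((continuous_apply _).norm) continuous_const

theorem compactSpace_spectrum : CompactSpace (Spectrum' A) := by
  classical
  have hex : ∀ f : RN N → ℂ, ∃ C : ℝ, 0 ≤ C ∧ (f ∈ A.carrier → ∀ x, ‖f x‖ ≤ C) := by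
    intro f
    by_cases h : f ∈ A.carrier
    · obtain ⟨C, hC⟩ := isBounded_iff_forall_norm_le.1 (A.buc f h).1
      refine ⟨max C 0, le_max_right _ _, fun _ x => le_trans ?_ (le_max_left _ _)⟩
      exact hC (f x) (Set.mem_range_self x)
    · exact ⟨0, le_rfl, fun hf => absurd hf h⟩
  choose B hB0 hBle using hex
  have hsub : {μ : (RN N → ℂ) → ℂ | IsCharacter A μ} ⊆
      Set.pi Set.univ (fun f => Metric.closedBall (0:ℂ) (B f)) := by
    intro μ hμ f _
    simp only [Metric.mem_closedBall, dist_zero_right]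
    by_cases h : f ∈ A.carrier
    · exact hμ.2.2.2.2.2 f h (B f) (hBle f h)
    · rw [hμ.2.2.2.2.1 f h]; simpa using hB0 f
  have : IsCompact {μ : (RN N → ℂ) → ℂ | IsCharacter A μ} :=
    (isCompact_univ_pi fun f => isCompact_closedBall (0:ℂ) (B f)).of_isClosed_subset
      (isClosed_characters A) hsub
  exact isCompact_iff_compactSpace.mp this

end Stmt4Aux
namespace Stmt4Aux
variable {N : ℕ} (A : MVAlgebra N)

theorem mem_of_eqFun {f g : RN N → ℂ} (h : ∀ x, f x = g x) (hg : g ∈ A.carrier) :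
    f ∈ A.carrier := by
  have : f = g := funext h
  rwa [this]

theorem pow_mem {g : RN N → ℂ} (hg : g ∈ A.carrier) (n : ℕ) :
    (fun x => g x ^ n) ∈ A.carrier := by
  induction n with
  | zero => exact mem_of_eqFun A (fun x => by simp) (A.const_mem 1)
  | succ n ih =>
    exact mem_of_eqFun A (fun x => pow_succ (g x) n)
      (A.mul_mem _ ih _ hg)

theorem polyeval_mem {g : RN N → ℂ} (hg : g ∈ A.carrier) (p : Polynomial ℝ) :
    (fun x => (p.map (algebraMap ℝ ℂ)).eval (g x)) ∈ A.carrier := by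
  induction p using Polynomial.induction_on' with
  | add p q hp hq =>
    refine mem_of_eqFun A (fun x => ?_) (A.add_mem _ hp _ hq)
    simp [Polynomial.eval_add]
  | monomial n a =>
    refine mem_of_eqFun A (fun x => ?_)
      (A.smul_mem ((algebraMap ℝ ℂ) a) _ (pow_mem A hg n))
    simp [Polynomial.eval_monomial, Pi.smul_apply, smul_eq_mul]

/-- Inverse-closedness of `A` for real elements bounded away from zero,
via Weierstrass approximation. -/
theorem inv_mem {g : RN N → ℂ} (hg : g ∈ A.carrier) (G : RN N → ℝ)
    (hgG : ∀ x, g x = (G x : ℂ)) {ε : ℝ} (hε : 0 < ε) (hlow : ∀ x, ε ≤ G x) :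
    (fun x => (g x)⁻¹) ∈ A.carrier := by
  obtain ⟨C, hC⟩ := isBounded_iff_forall_norm_le.1 (A.buc g hg).1
  have hC' : ∀ x, ‖g x‖ ≤ C := fun x => hC (g x) (Set.mem_range_self x)
  have hGmem : ∀ x, G x ∈ Set.Icc ε C := by
    intro x
    refine ⟨hlow x, ?_⟩
    have : ‖g x‖ = |G x| := by rw [hgG x]; exact (Complex.norm_real _).trans (Real.norm_eq_abs _)
    exact le_trans (le_abs_self _) (this ▸ hC' x)
  apply A.closed
  intro δ hδ
  have hcont : ContinuousOn (fun t : ℝ => t⁻¹) (Set.Icc ε C) := by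
    apply ContinuousOn.inv₀ continuousOn_id
    intro t ht
    exact ne_of_gt (lt_of_lt_of_le hε ht.1)
  obtain ⟨p, hp⟩ := exists_polynomial_near_of_continuousOn ε C _ hcont δ hδ
  refine ⟨fun x => (p.map (algebraMap ℝ ℂ)).eval (g x), polyeval_mem A hg p, ?_⟩
  intro x
  have he : (p.map (algebraMap ℝ ℂ)).eval (g x) = ((p.eval (G x) : ℝ) : ℂ) := by
    rw [hgG x, Polynomial.eval_map]
    exact Polynomial.eval₂_at_apply (algebraMap ℝ ℂ) (G x)
  show ‖(g x)⁻¹ - Polynomial.eval (g x) (Polynomial.map (algebraMap ℝ ℂ) p)‖ ≤ δ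
  rw [he, hgG x, ← Complex.ofReal_inv, ← Complex.ofReal_sub, Complex.norm_real,
    Real.norm_eq_abs, abs_sub_comm]
  exact le_of_lt (hp (G x) (hGmem x))

end Stmt4Aux
namespace Stmt4Aux
variable {N : ℕ} (A : MVAlgebra N)

theorem const_smul_one (c : ℂ) : (fun _ : RN N => c) = c • (fun _ : RN N => (1:ℂ)) := by
  funext x; simp

theorem mu_const (μ : Spectrum' A) (c : ℂ) : μ.1 (fun _ => c) = c := by
  rw [const_smul_one]
  rw [μ.2.2.1 c _ (A.const_mem 1), μ.2.2.2.2.1]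
  simp

theorem dirac_approx (μ : Spectrum' A) (I : Finset (RN N → ℂ)) {ε : ℝ} (hε : 0 < ε) :
    ∃ y, ∀ f ∈ I, f ∈ A.carrier → ‖μ.1 f - f y‖ < ε := by
  classical
  by_contra hcon
  push_neg at hcon
  set J := I.filter (· ∈ A.carrier) with hJ
  set df : (RN N → ℂ) → RN N → ℂ := fun f => f + fun _ => -(μ.1 f) with hdf
  have hdf_mem : ∀ f ∈ A.carrier, df f ∈ A.carrier := fun f hf =>
    A.add_mem f hf _ (A.const_mem _)
  have hμdf : ∀ f ∈ A.carrier, μ.1 (df f) = 0 := by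
    intro f hf
    have h1 : μ.1 (df f) = μ.1 f + μ.1 (fun _ => -(μ.1 f)) :=
      μ.2.1 f hf _ (A.const_mem _)
    rw [h1, mu_const A μ]; ring
  set hfun : (RN N → ℂ) → RN N → ℂ :=
    fun f => (df f) * (fun x => (starRingEnd ℂ) (df f x)) with hhfun
  have hfun_mem : ∀ f ∈ A.carrier, hfun f ∈ A.carrier := fun f hf =>
    A.mul_mem _ (hdf_mem f hf) _ (A.conj_mem _ (hdf_mem f hf))
  have hμhfun : ∀ f ∈ A.carrier, μ.1 (hfun f) = 0 := by
    intro f hf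
    rw [μ.2.2.2.1 _ (hdf_mem f hf) _ (A.conj_mem _ (hdf_mem f hf)), hμdf f hf, zero_mul]
  set g : RN N → ℂ := ∑ f ∈ J, hfun f with hg
  have hJmem : ∀ f ∈ J, f ∈ A.carrier := by
    intro f hf; exact (Finset.mem_filter.1 hf).2
  have key : ∀ s : Finset (RN N → ℂ), (∀ f ∈ s, f ∈ A.carrier) →
      (∑ f ∈ s, hfun f) ∈ A.carrier ∧ μ.1 (∑ f ∈ s, hfun f) = 0 := by
    intro s
    induction s using Finset.induction with
    | empty =>
      intro _
      have h0 : (∑ f ∈ (∅ : Finset (RN N → ℂ)), hfun f) = fun _ => (0:ℂ) := by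
        simp [Finset.sum_empty]; rfl
      rw [h0]
      exact ⟨A.const_mem 0, mu_const A μ 0⟩
    | @insert a s ha ih =>
      intro hmem
      have h1 := ih (fun f hf => hmem f (Finset.mem_insert_of_mem hf))
      rw [Finset.sum_insert ha]
      have hamem := hmem a (Finset.mem_insert_self a s)
      constructor
      · exact A.add_mem _ (hfun_mem a hamem) _ h1.1
      · rw [μ.2.1 _ (hfun_mem a hamem) _ h1.1, h1.2, hμhfun a hamem, zero_add]
  obtain ⟨hgmem, hμg⟩ := key J hJmem
  set G : RN N → ℝ := fun x => ∑ f ∈ J, Complex.normSq (df f x) with hG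
  have hgG : ∀ x, g x = (G x : ℂ) := by
    intro x
    rw [hg, hG, Finset.sum_apply, Complex.ofReal_sum]
    refine Finset.sum_congr rfl fun f _ => ?_
    show df f x * (starRingEnd ℂ) (df f x) = _
    exact Complex.mul_conj _
  have hlow : ∀ y, ε ^ 2 ≤ G y := by
    intro y
    obtain ⟨f, hfI, hfA, hfe⟩ := hcon y
    have hfJ : f ∈ J := Finset.mem_filter.2 ⟨hfI, hfA⟩
    have h1 : ε ^ 2 ≤ Complex.normSq (df f y) := by
      have : df f y = f y - μ.1 f := by
        show f y + -(μ.1 f) = _; ring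
      rw [Complex.normSq_eq_norm_sq, this]
      have h2 : ε ≤ ‖f y - μ.1 f‖ := by
        rw [norm_sub_rev]; exact hfe
      exact pow_le_pow_left₀ (le_of_lt hε) h2 2
    calc ε ^ 2 ≤ Complex.normSq (df f y) := h1
      _ ≤ G y := Finset.single_le_sum (f := fun f => Complex.normSq (df f y)) (fun f _ => Complex.normSq_nonneg _) hfJ
  have hinv := inv_mem A hgmem G hgG (pow_pos hε 2) hlow
  have hne : ∀ x, g x ≠ 0 := by
    intro x h0
    have := hlow x
    rw [hgG x] at h0
    have : G x = 0 := by exact_mod_cast h0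
    nlinarith [hlow x]
  have hone : g * (fun x => (g x)⁻¹) = fun _ => (1:ℂ) := by
    funext x
    exact mul_inv_cancel₀ (hne x)
  have h2 : μ.1 (g * fun x => (g x)⁻¹) = 0 := by
    rw [μ.2.2.2.1 _ hgmem _ hinv, hμg, zero_mul]
  rw [hone, μ.2.2.2.2.1] at h2
  exact one_ne_zero h2

end Stmt4Aux
namespace Stmt4Aux
variable {N : ℕ} (A : MVAlgebra N)

theorem dense_dirac (μ : Spectrum' A) : μ ∈ closure (Set.range (diracS A)) := by
  classical
  rw [closure_subtype]
  rw [mem_closure_iff]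
  intro U hU hxU
  obtain ⟨I, u, hIu, hpi⟩ := isOpen_pi_iff.1 hU μ.1 hxU
  have hball : ∀ f ∈ I, ∃ δ : ℝ, 0 < δ ∧ Metric.ball (μ.1 f) δ ⊆ u f := by
    intro f hf
    exact Metric.isOpen_iff.1 (hIu f hf).1 _ (hIu f hf).2
  choose! δ hδpos hδsub using hball
  obtain ⟨ε, hε0, hεle⟩ : ∃ ε : ℝ, 0 < ε ∧ ∀ f ∈ I, ε ≤ δ f := by
    rcases I.eq_empty_or_nonempty with h | h
    · exact ⟨1, one_pos, by simp [h]⟩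
    · refine ⟨I.inf' h δ, ?_, fun f hf => Finset.inf'_le δ hf⟩
      rw [Finset.lt_inf'_iff]
      intro f hf; exact hδpos f hf
  obtain ⟨y, hy⟩ := dirac_approx A μ I hε0
  refine ⟨diracFun A y, ?_, ⟨diracS A y, Set.mem_range_self y, rfl⟩⟩
  apply hpi
  intro f hf
  show u f (diracFun A y f)
  by_cases hfA : f ∈ A.carrier
  · apply hδsub f hf
    rw [Metric.mem_ball]
    have : diracFun A y f = f y := by simp [diracFun, if_pos hfA]
    rw [this, dist_eq_norm, norm_sub_rev]
    exact lt_of_lt_of_le (hy f hf hfA) (hεle f hf)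
  · have h1 : diracFun A y f = 0 := by simp [diracFun, if_neg hfA]
    have h2 : μ.1 f = 0 := μ.2.2.2.2.2.1 f hfA
    rw [h1, ← h2]
    exact (hIu f hf).2

end Stmt4Aux

/-- Let `A` be introverted, so that `Δ(A)` is a compact topological
semigroup under the Arens product, with identity the Dirac mass at `0`. If the
multiplication is jointly continuous, every element of `Δ(A)` is invertible and
`Δ(A)` is a compact topological group (inversion is continuous). -/
theorem stmt4 {N : ℕ} (A : MVAlgebra N) (hA : Introverted A)
    (mul : Spectrum' A → Spectrum' A → Spectrum' A) (hmul : IsArensMul A mul)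
    (hassoc : ∀ μ ν ρ : Spectrum' A, mul (mul μ ν) ρ = mul μ (mul ν ρ))
    (e : Spectrum' A) (he : e.1 = diracFun A 0)
    (hid : ∀ μ, mul e μ = μ ∧ mul μ e = μ)
    (hjoint : Continuous fun p : Spectrum' A × Spectrum' A => mul p.1 p.2) :
    (∀ μ : Spectrum' A, ∃ ν, mul μ ν = e ∧ mul ν μ = e) ∧
    ∃ inv : Spectrum' A → Spectrum' A, Continuous inv ∧
      ∀ μ, mul μ (inv μ) = e ∧ mul (inv μ) μ = e := by
  classical
  haveI : CompactSpace (Spectrum' A) := Stmt4Aux.compactSpace_spectrum A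
  have he' : e = Stmt4Aux.diracS A 0 := Subtype.ext he
  -- Part 1: every element is invertible
  have part1 : ∀ μ : Spectrum' A, ∃ ν, mul μ ν = e ∧ mul ν μ = e := by
    intro μ
    have hcl := Stmt4Aux.dense_dirac A μ
    set F := Filter.comap (Stmt4Aux.diracS A) (𝓝 μ) with hF
    haveI : F.NeBot := by
      rw [hF, Filter.comap_neBot_iff]
      intro s hs
      obtain ⟨z, hz1, y, rfl⟩ := mem_closure_iff_nhds.mp hcl s hs
      exact ⟨y, hz1⟩
    set U : Ultrafilter (RN N) := Ultrafilter.of F with hUdef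
    have hUF : ↑U ≤ F := Ultrafilter.of_le F
    have hdir : Filter.Tendsto (Stmt4Aux.diracS A) U (𝓝 μ) :=
      le_trans (Filter.map_mono hUF) Filter.map_comap_le
    set neg : RN N → Spectrum' A := fun y => Stmt4Aux.diracS A (-y) with hneg
    obtain ⟨ν, -, hν⟩ := isCompact_univ.ultrafilter_le_nhds (U.map neg) (by simp)
    have hnegt : Filter.Tendsto neg U (𝓝 ν) := hν
    have hprod : Filter.Tendsto (fun y => (Stmt4Aux.diracS A y, neg y)) U (𝓝 (μ, ν)) := by
      rw [nhds_prod_eq]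
      exact hdir.prodMk hnegt
    have hmn : Filter.Tendsto (fun y => mul (Stmt4Aux.diracS A y) (neg y)) U
        (𝓝 (mul μ ν)) := ((hjoint.tendsto (μ, ν)).comp hprod)
    have hnm : Filter.Tendsto (fun y => mul (neg y) (Stmt4Aux.diracS A y)) U
        (𝓝 (mul ν μ)) := by
      have hprod' : Filter.Tendsto (fun y => (neg y, Stmt4Aux.diracS A y)) U (𝓝 (ν, μ)) := by
        rw [nhds_prod_eq]; exact hnegt.prodMk hdir
      exact (hjoint.tendsto (ν, μ)).comp hprod'
    have hconst1 : (fun y => mul (Stmt4Aux.diracS A y) (neg y)) = fun _ => e := by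
      funext y
      rw [hneg, Stmt4Aux.diracS_mul A mul hmul, add_neg_cancel, he']
    have hconst2 : (fun y => mul (neg y) (Stmt4Aux.diracS A y)) = fun _ => e := by
      funext y
      rw [hneg, Stmt4Aux.diracS_mul A mul hmul, neg_add_cancel, he']
    rw [hconst1] at hmn
    rw [hconst2] at hnm
    exact ⟨ν, tendsto_nhds_unique hmn tendsto_const_nhds,
      tendsto_nhds_unique hnm tendsto_const_nhds⟩
  refine ⟨part1, ?_⟩
  choose inv hinv1 hinv2 using part1
  refine ⟨inv, ?_, fun μ => ⟨hinv1 μ, hinv2 μ⟩⟩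
  -- uniqueness of inverses
  have huniq : ∀ μ ν : Spectrum' A, mul μ ν = e → ν = inv μ := by
    intro μ ν h
    calc ν = mul e ν := ((hid ν).1).symm
      _ = mul (mul (inv μ) μ) ν := by rw [hinv2 μ]
      _ = mul (inv μ) (mul μ ν) := hassoc _ _ _
      _ = mul (inv μ) e := by rw [h]
      _ = inv μ := (hid (inv μ)).2
  rw [continuous_iff_ultrafilter]
  intro x U hU
  obtain ⟨ν, -, hν⟩ := isCompact_univ.ultrafilter_le_nhds (U.map inv) (by simp)
  have hνt : Filter.Tendsto inv U (𝓝 ν) := hν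
  have hxt : Filter.Tendsto id U (𝓝 x) := hU
  have hprod : Filter.Tendsto (fun s => (s, inv s)) U (𝓝 (x, ν)) := by
    rw [nhds_prod_eq]; exact hxt.prodMk hνt
  have hmn : Filter.Tendsto (fun s => mul s (inv s)) U (𝓝 (mul x ν)) :=
    (hjoint.tendsto (x, ν)).comp hprod
  have hconst : (fun s => mul s (inv s)) = fun _ => e := funext fun s => hinv1 s
  rw [hconst] at hmn
  have : mul x ν = e := tendsto_nhds_unique hmn tendsto_const_nhds
  rw [huniq x ν this] at hνt
  exact hνt
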